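/- Every finite simple graph Γ on a set of d nodes is isomorphic to an induced subgraph of the skeleton of some d-dimensional 0/1 convex polytope, namely P(Γ̄), the polytope of the complement graph: Γ is isomorphic to the subgraph induced by the skeleton of P(Γ̄) on the neighborhood of the vertex χ(∅). -/

import Mathlib

open Set

noncomputable section

variable {V : Type*}

/-- Characteristic vector of a set of nodes. -/
def chi (S : Set V) : V → ℝ := S.indicator (fun _ => (1 : ℝ))

/-- The candidate vertex set of the polytope `P(Γ)`. -/
def polyVerts (G : SimpleGraph V) : Set (V → ℝ) :=
  {x | x = chi (∅ : Set V) ∨ (∃ v : V, x = chi {v}) ∨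
        (∃ u w : V, G.Adj u w ∧ x = chi {u, w})}

/-- The polytope `P(Γ)`. -/
def poly (G : SimpleGraph V) : Set (V → ℝ) := convexHull ℝ (polyVerts G)

/-- Two points are adjacent vertices of a convex set `P` when the segment
joining them is a (1-dimensional) face, i.e. an extreme subset of `P`. -/
def AdjVert (P : Set (V → ℝ)) (p q : V → ℝ) : Prop :=
  p ≠ q ∧ IsExtreme ℝ P (segment ℝ p q)

/-- A combinatorial automorphism of `P`: a bijection of the vertex (extreme point)
set of `P` mapping the vertex set of each face onto the vertex set of some face. -/
def IsCombAut (P : Set (V → ℝ)) (σ : (V → ℝ) → (V → ℝ)) : Prop :=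
  Set.BijOn σ (P.extremePoints ℝ) (P.extremePoints ℝ) ∧
  ∀ F : Set (V → ℝ), IsExtreme ℝ P F →
    ∃ F' : Set (V → ℝ), IsExtreme ℝ P F' ∧
      σ '' (F ∩ P.extremePoints ℝ) = F' ∩ P.extremePoints ℝ

/-- An automorphism of the skeleton of `P`: a bijection of the vertex set of `P`
preserving adjacency (in both directions). -/
def IsSkelAut (P : Set (V → ℝ)) (σ : (V → ℝ) → (V → ℝ)) : Prop :=
  Set.BijOn σ (P.extremePoints ℝ) (P.extremePoints ℝ) ∧
  ∀ p ∈ P.extremePoints ℝ, ∀ q ∈ P.extremePoints ℝ,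
    (AdjVert P p q ↔ AdjVert P (σ p) (σ q))

/-! ### Auxiliary lemmas -/

open scoped Classical

lemma chi_empty : chi (∅ : Set V) = 0 := by
  ext v; simp [chi]

lemma chi_single_apply (u v : V) : chi ({u} : Set V) v = if v = u then 1 else 0 := by
  simp [chi, indicator_apply]

lemma chi_pair {u w : V} (huw : u ≠ w) :
    chi ({u, w} : Set V) = chi ({u} : Set V) + chi ({w} : Set V) := by
  ext v
  by_cases h1 : v = u <;> by_cases h2 : v = w <;>
    simp_all [chi, indicator_apply]

lemma chi_single_injective : Function.Injective (fun u : V => chi ({u} : Set V)) := by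
  intro a b h
  by_contra hab
  have := congrFun h a
  simp only [chi_single_apply, if_pos rfl, if_neg hab] at this
  norm_num at this

lemma chi_empty_ne_single (u : V) : chi (∅ : Set V) ≠ chi ({u} : Set V) := by
  intro h
  have := congrFun h u
  simp [chi, chi_single_apply] at this

section linf
variable [Fintype V]

/-- The linear functional `x ↦ ∑ v, c v * x v`. -/
def linF (c : V → ℝ) : (V → ℝ) →ₗ[ℝ] ℝ where
  toFun x := ∑ v, c v * x v
  map_add' x y := by simp [mul_add, Finset.sum_add_distrib]
  map_smul' r x := by simp [Finset.mul_sum, mul_left_comm]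

lemma linF_single (c : V → ℝ) (u : V) : linF c (chi ({u} : Set V)) = c u := by
  simp only [linF, LinearMap.coe_mk, AddHom.coe_mk, chi_single_apply, mul_ite, mul_one, mul_zero]
  rw [Finset.sum_ite_eq' Finset.univ u c, if_pos (Finset.mem_univ u)]

lemma linF_pair (c : V → ℝ) {u w : V} (huw : u ≠ w) :
    linF c (chi ({u, w} : Set V)) = c u + c w := by
  rw [chi_pair huw, map_add, linF_single, linF_single]

lemma linF_empty (c : V → ℝ) : linF c (chi (∅ : Set V)) = 0 := by
  rw [chi_empty, map_zero]

end linf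

lemma isExtreme_face {P : Set (V → ℝ)} (f : (V → ℝ) →ₗ[ℝ] ℝ) (c : ℝ)
    (h : ∀ x ∈ P, f x ≤ c) : IsExtreme ℝ P {x ∈ P | f x = c} := by
  constructor
  · exact fun x hx => hx.1
  · rintro x1 hx1 x2 hx2 x ⟨hxP, hxf⟩ hseg
    obtain ⟨a, b, ha, hb, hab, rfl⟩ := hseg
    have h1 := h x1 hx1
    have h2 := h x2 hx2
    have hsum : a * f x1 + b * f x2 = c := by
      rw [← hxf]; simp
    have habc : a * c + b * c = c := by rw [← add_mul, hab, one_mul]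
    have e1 : f x1 = c := by
      by_contra hlt
      have h1' : f x1 < c := lt_of_le_of_ne h1 hlt
      nlinarith [mul_pos ha (sub_pos.2 h1'), mul_le_mul_of_nonneg_left h2 hb.le]
    have e2 : f x2 = c := by
      by_contra hlt
      have h2' : f x2 < c := lt_of_le_of_ne h2 hlt
      nlinarith [mul_pos hb (sub_pos.2 h2'), mul_le_mul_of_nonneg_left h1 ha.le]
    exact ⟨hx1, e1⟩

lemma face_convexHull (S : Set (V → ℝ)) (f : (V → ℝ) →ₗ[ℝ] ℝ) (c : ℝ)
    (hS : ∀ x ∈ S, f x ≤ c) :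
    {x ∈ convexHull ℝ S | f x = c} = convexHull ℝ {x ∈ S | f x = c} := by
  apply Subset.antisymm
  · rintro x ⟨hx, hfx⟩
    rw [convexHull_eq] at hx
    obtain ⟨ι, t, w, z, hw₀, hw₁, hz, hx⟩ := hx
    have hcm : t.centerMass w z = ∑ i ∈ t, w i • z i := t.centerMass_eq_of_sum_1 z hw₁
    have hfsum : ∑ i ∈ t, w i * f (z i) = c := by
      rw [← hfx, ← hx, hcm, map_sum]
      simp
    have hle : ∀ i ∈ t, w i * f (z i) ≤ w i * c := fun i hi =>
      mul_le_mul_of_nonneg_left (hS _ (hz i hi)) (hw₀ i hi)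
    have hcsum : ∑ i ∈ t, w i * c = c := by
      rw [← Finset.sum_mul, hw₁, one_mul]
    have heach : ∀ i ∈ t, w i * f (z i) = w i * c :=
      (Finset.sum_eq_sum_iff_of_le hle).1 (hfsum.trans hcsum.symm)
    have hx' : ({i ∈ t | w i ≠ 0} : Finset ι).centerMass w z = x := by
      rw [Finset.centerMass_filter_ne_zero, hx]
    rw [← hx']
    apply Finset.centerMass_mem_convexHull
    · intro i hi
      exact hw₀ i (Finset.mem_filter.1 hi).1
    · have : ∑ i ∈ {i ∈ t | w i ≠ 0}, w i = 1 := by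
        rw [Finset.sum_filter_ne_zero, hw₁]
      rw [this]; norm_num
    · intro i hi
      obtain ⟨hit, hwi⟩ := Finset.mem_filter.1 hi
      refine ⟨hz i hit, ?_⟩
      have := heach i hit
      exact mul_left_cancel₀ hwi this
  · apply convexHull_min
    · rintro x ⟨hxS, hxf⟩
      exact ⟨subset_convexHull ℝ S hxS, hxf⟩
    · exact (convex_convexHull ℝ S).inter (convex_hyperplane f.isLinear c)

lemma segment_isExtreme {S : Set (V → ℝ)} {f : (V → ℝ) →ₗ[ℝ] ℝ} {c : ℝ} {p q : V → ℝ}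
    (hS : ∀ x ∈ S, f x ≤ c) (heq : {x ∈ S | f x = c} = {p, q}) :
    IsExtreme ℝ (convexHull ℝ S) (segment ℝ p q) := by
  have hP : ∀ x ∈ convexHull ℝ S, f x ≤ c :=
    fun x hx => convexHull_min hS (convex_halfSpace_le f.isLinear c) hx
  have := isExtreme_face f c hP
  rwa [face_convexHull S f c hS, heq, convexHull_pair] at this

lemma poly_subset_cube (G : SimpleGraph V) :
    poly G ⊆ {x : V → ℝ | ∀ v, x v ∈ Icc (0 : ℝ) 1} := by
  apply convexHull_min
  · rintro x hx v
    have hval : ∀ (S : Set V), chi S v ∈ Icc (0:ℝ) 1 := by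
      intro S
      by_cases h : v ∈ S <;> simp [chi, indicator_apply, h]
    rcases hx with rfl | ⟨u, rfl⟩ | ⟨u, w, _, rfl⟩ <;> exact hval _
  · intro x hx y hy a b ha hb hab
    intro v
    have hx' := hx v
    have hy' := hy v
    simp only [Pi.add_apply, Pi.smul_apply, smul_eq_mul, mem_Icc] at *
    constructor
    · nlinarith [hx'.1, hy'.1]
    · nlinarith [hx'.2, hy'.2, hx'.1, hy'.1]

lemma chi_mem_extremePoints {G : SimpleGraph V} {x : V → ℝ}
    (hx : x ∈ polyVerts G) (h01 : ∀ v, x v = 0 ∨ x v = 1) :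
    x ∈ (poly G).extremePoints ℝ := by
  refine mem_extremePoints.2 ⟨subset_convexHull ℝ _ hx, ?_⟩
  intro y hy z hz hxs
  have hyc := poly_subset_cube G hy
  have hzc := poly_subset_cube G hz
  obtain ⟨a, b, ha, hb, hab, hsum⟩ := hxs
  have key : ∀ v, y v = x v ∧ z v = x v := by
    intro v
    have hy0 := (hyc v).1; have hy1 := (hyc v).2
    have hz0 := (hzc v).1; have hz1 := (hzc v).2
    have hv : a * y v + b * z v = x v := by
      rw [← hsum]; simp
    rcases h01 v with h | h <;> rw [h] at hv ⊢ <;> constructor <;> nlinarith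
  constructor <;> ext v
  · exact (key v).1
  · exact (key v).2

lemma polyVerts_zero_one {G : SimpleGraph V} {x : V → ℝ} (hx : x ∈ polyVerts G) :
    ∀ v, x v = 0 ∨ x v = 1 := by
  intro v
  have hval : ∀ (S : Set V), chi S v = 0 ∨ chi S v = 1 := by
    intro S
    by_cases h : v ∈ S <;> simp [chi, indicator_apply, h]
  rcases hx with rfl | ⟨u, rfl⟩ | ⟨u, w, _, rfl⟩ <;> exact hval _

/-- If `{u,w}` is an edge of `G`, the segment from `χ∅` to `χ{u,w}` is not extreme. -/
lemma not_adjVert_empty_pair {G : SimpleGraph V} {u w : V} (huw : G.Adj u w) :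
    ¬ IsExtreme ℝ (poly G) (segment ℝ (chi (∅ : Set V)) (chi ({u, w} : Set V))) := by
  intro hext
  have hne := huw.ne
  have hu : chi ({u} : Set V) ∈ poly G :=
    subset_convexHull ℝ _ (Or.inr (Or.inl ⟨u, rfl⟩))
  have hw : chi ({w} : Set V) ∈ poly G :=
    subset_convexHull ℝ _ (Or.inr (Or.inl ⟨w, rfl⟩))
  have hmid : (1/2 : ℝ) • chi ({u} : Set V) + (1/2 : ℝ) • chi ({w} : Set V)
      ∈ segment ℝ (chi (∅ : Set V)) (chi ({u, w} : Set V)) := by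
    refine ⟨1/2, 1/2, by norm_num, by norm_num, by norm_num, ?_⟩
    rw [chi_empty, chi_pair hne, smul_add]
    module
  have := (hext.2 hu hw hmid
    ⟨1/2, 1/2, by norm_num, by norm_num, by norm_num, rfl⟩)
  obtain ⟨a, b, _, hb, hab, hsum⟩ := this
  rw [chi_empty, chi_pair hne] at hsum
  have h1 := congrFun hsum u
  have h2 := congrFun hsum w
  simp only [Pi.add_apply, Pi.smul_apply, Pi.zero_apply, smul_eq_mul, chi_single_apply,
    if_pos rfl, if_neg hne, if_neg hne.symm, if_true, mul_zero, mul_one, mul_add, add_zero,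
    zero_add] at h1 h2
  linarith

/-- If `{u,w}` is an edge of `G`, the segment from `χ{u}` to `χ{w}` is not extreme. -/
lemma not_adjVert_single_single {G : SimpleGraph V} {u w : V} (huw : G.Adj u w) :
    ¬ IsExtreme ℝ (poly G) (segment ℝ (chi ({u} : Set V)) (chi ({w} : Set V))) := by
  intro hext
  have hne := huw.ne
  have h0 : chi (∅ : Set V) ∈ poly G := subset_convexHull ℝ _ (Or.inl rfl)
  have hp : chi ({u, w} : Set V) ∈ poly G :=
    subset_convexHull ℝ _ (Or.inr (Or.inr ⟨u, w, huw, rfl⟩))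
  have hmid : (1/2 : ℝ) • chi (∅ : Set V) + (1/2 : ℝ) • chi ({u, w} : Set V)
      ∈ segment ℝ (chi ({u} : Set V)) (chi ({w} : Set V)) := by
    refine ⟨1/2, 1/2, by norm_num, by norm_num, by norm_num, ?_⟩
    rw [chi_empty, chi_pair hne, smul_add]
    module
  have := (hext.2 h0 hp hmid
    ⟨1/2, 1/2, by norm_num, by norm_num, by norm_num, rfl⟩)
  obtain ⟨a, b, ha, hb, hab, hsum⟩ := this
  rw [chi_empty] at hsum
  have h1 := congrFun hsum u
  have h2 := congrFun hsum w
  simp only [Pi.add_apply, Pi.smul_apply, Pi.zero_apply, smul_eq_mul, chi_single_apply,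
    if_pos rfl, if_neg hne, if_neg hne.symm, if_true, mul_zero, mul_one, add_zero,
    zero_add] at h1 h2
  linarith

theorem stmt11 [Fintype V] [Nonempty V] (G : SimpleGraph V) :
    Function.Injective (fun u : V => chi ({u} : Set V)) ∧
    {q | q ∈ (poly Gᶜ).extremePoints ℝ ∧ AdjVert (poly Gᶜ) (chi (∅ : Set V)) q} =
      {x | ∃ u : V, x = chi ({u} : Set V)} ∧
    (∀ u v : V,
      G.Adj u v ↔ AdjVert (poly Gᶜ) (chi ({u} : Set V)) (chi ({v} : Set V))) := by
  refine ⟨chi_single_injective, ?_, ?_⟩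
  · -- neighborhood of χ∅ is exactly the singletons
    apply Subset.antisymm
    · rintro q ⟨hq, hne, hext⟩
      have hq' : q ∈ polyVerts Gᶜ := extremePoints_convexHull_subset hq
      rcases hq' with rfl | ⟨u, rfl⟩ | ⟨a, b, hab, rfl⟩
      · exact absurd rfl hne
      · exact ⟨u, rfl⟩
      · exact absurd hext (not_adjVert_empty_pair hab)
    · rintro x ⟨u, rfl⟩
      have hmem : chi ({u} : Set V) ∈ polyVerts Gᶜ := Or.inr (Or.inl ⟨u, rfl⟩)
      refine ⟨chi_mem_extremePoints hmem (polyVerts_zero_one hmem), chi_empty_ne_single u, ?_⟩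
      -- supporting functional: c v = if v = u then 0 else -1, maximum value 0
      let cf : V → ℝ := fun v => if v = u then 0 else -1
      have hcf0 : cf u = 0 := if_pos rfl
      have hcfn : ∀ v, v ≠ u → cf v = -1 := fun v hv => if_neg hv
      have hpairval : ∀ a b : V, a ≠ b → cf a + cf b ≤ -1 := by
        intro a b hne'
        rcases eq_or_ne a u with rfl | ha'
        · rw [hcf0, hcfn b (Ne.symm hne')]; norm_num
        · rcases eq_or_ne b u with rfl | hb'
          · rw [hcf0, hcfn a ha']; norm_num
          · rw [hcfn a ha', hcfn b hb']; norm_num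
      have hS : ∀ x ∈ polyVerts Gᶜ, linF cf x ≤ 0 := by
        rintro x (rfl | ⟨w, rfl⟩ | ⟨a, b, hab, rfl⟩)
        · rw [linF_empty]
        · rw [linF_single]
          rcases eq_or_ne w u with rfl | h
          · rw [hcf0]
          · rw [hcfn w h]; norm_num
        · rw [linF_pair cf hab.ne]
          linarith [hpairval a b hab.ne]
      have heq : {x ∈ polyVerts Gᶜ | linF cf x = 0} =
          {chi (∅ : Set V), chi ({u} : Set V)} := by
        apply Subset.antisymm
        · rintro x ⟨(rfl | ⟨w, rfl⟩ | ⟨a, b, hab, rfl⟩), hfx⟩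
          · exact Or.inl rfl
          · rw [linF_single] at hfx
            rcases eq_or_ne w u with rfl | h
            · exact Or.inr rfl
            · rw [hcfn w h] at hfx; norm_num at hfx
          · exfalso
            rw [linF_pair cf hab.ne] at hfx
            linarith [hpairval a b hab.ne]
        · rintro x (rfl | rfl)
          · exact ⟨Or.inl rfl, linF_empty cf⟩
          · exact ⟨hmem, by rw [linF_single, hcf0]⟩
      exact segment_isExtreme hS heq
  · intro u v
    constructor
    · intro huv
      have hne := huv.ne
      have hnc : ¬ Gᶜ.Adj u v := by
        simp [SimpleGraph.compl_adj, huv]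
      refine ⟨fun h => hne (chi_single_injective h), ?_⟩
      let cf : V → ℝ := fun w => if w = u ∨ w = v then 1 else -2
      have hcfu : cf u = 1 := if_pos (Or.inl rfl)
      have hcfv : cf v = 1 := if_pos (Or.inr rfl)
      have hcfn : ∀ w, w ≠ u → w ≠ v → cf w = -2 := fun w h1 h2 =>
        if_neg (by rintro (rfl | rfl) <;> [exact h1 rfl; exact h2 rfl])
      have hpairval : ∀ a b : V, Gᶜ.Adj a b → cf a + cf b ≤ -1 := by
        intro a b hab
        have hnab : ¬ ((a = u ∨ a = v) ∧ (b = u ∨ b = v)) := by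
          rintro ⟨(rfl | rfl), (rfl | rfl)⟩
          · exact hab.ne rfl
          · exact hnc hab
          · exact hnc hab.symm
          · exact hab.ne rfl
        by_cases h1 : a = u ∨ a = v
        · have hb : cf b = -2 := by
            rcases not_and.1 hnab h1 with h
            exact hcfn b (fun e => h (Or.inl e)) (fun e => h (Or.inr e))
          have ha : cf a = 1 := if_pos h1
          rw [ha, hb]; norm_num
        · have ha : cf a = -2 := hcfn a (fun e => h1 (Or.inl e)) (fun e => h1 (Or.inr e))
          have hb : cf b ≤ 1 := by
            by_cases h2 : b = u ∨ b = v
            · rw [show cf b = 1 from if_pos h2]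
            · rw [hcfn b (fun e => h2 (Or.inl e)) (fun e => h2 (Or.inr e))]; norm_num
          rw [ha]; linarith
      have hS : ∀ x ∈ polyVerts Gᶜ, linF cf x ≤ 1 := by
        rintro x (rfl | ⟨w, rfl⟩ | ⟨a, b, hab, rfl⟩)
        · rw [linF_empty]; norm_num
        · rw [linF_single]
          by_cases h : w = u ∨ w = v
          · rw [show cf w = 1 from if_pos h]
          · rw [hcfn w (fun e => h (Or.inl e)) (fun e => h (Or.inr e))]; norm_num
        · rw [linF_pair cf hab.ne]
          linarith [hpairval a b hab]
      have heq : {x ∈ polyVerts Gᶜ | linF cf x = 1} =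
          {chi ({u} : Set V), chi ({v} : Set V)} := by
        apply Subset.antisymm
        · rintro x ⟨(rfl | ⟨w, rfl⟩ | ⟨a, b, hab, rfl⟩), hfx⟩
          · rw [linF_empty] at hfx; norm_num at hfx
          · rw [linF_single] at hfx
            by_cases h : w = u ∨ w = v
            · rcases h with rfl | rfl
              · exact Or.inl rfl
              · exact Or.inr rfl
            · rw [hcfn w (fun e => h (Or.inl e)) (fun e => h (Or.inr e))] at hfx
              norm_num at hfx
          · exfalso
            rw [linF_pair cf hab.ne] at hfx
            linarith [hpairval a b hab]
        · rintro x (rfl | rfl)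
          · exact ⟨Or.inr (Or.inl ⟨u, rfl⟩), by rw [linF_single, hcfu]⟩
          · exact ⟨Or.inr (Or.inl ⟨v, rfl⟩), by rw [linF_single, hcfv]⟩
      exact segment_isExtreme hS heq
    · rintro ⟨hne, hext⟩
      have huv : u ≠ v := fun h => hne (by rw [h])
      by_contra hadj
      have hc : Gᶜ.Adj u v := by
        simp [SimpleGraph.compl_adj, huv, hadj]
      exact not_adjVert_single_single hc hext
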